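/- Let G be a simple triangle-free graph on n vertices with m edges. If m = ⌊n²/4⌋, then G is isomorphic to the complete bipartite graph K_{⌊n/2⌋,⌈n/2⌉}; that is, K_{⌊n/2⌋,⌈n/2⌉} is the unique triangle-free graph on n vertices attaining the Mantel bound ⌊n²/4⌋ on the number of edges. -/

import Mathlib

open SimpleGraph Finset

private instance cbgDecAdj {V W : Type*} [DecidableEq V] [DecidableEq W] :
    DecidableRel (completeBipartiteGraph V W).Adj := fun v w => by
  dsimp [completeBipartiteGraph]; infer_instance

private lemma iso_card_edgeFinset {V W : Type*} [Fintype V] [Fintype W]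
    {G : SimpleGraph V} {H : SimpleGraph W} [Fintype G.edgeSet] [Fintype H.edgeSet]
    (f : G ≃g H) : G.edgeFinset.card = H.edgeFinset.card := by
  classical
  simp only [edgeFinset, Set.toFinset_card]
  exact Fintype.card_congr f.mapEdgeSet

private lemma cbg_card (a b : ℕ) :
    (completeBipartiteGraph (Fin a) (Fin b)).edgeFinset.card = a * b := by
  classical
  have himg : (completeBipartiteGraph (Fin a) (Fin b)).edgeFinset
      = (Finset.univ : Finset (Fin a × Fin b)).image
        (fun p => s(Sum.inl p.1, Sum.inr p.2)) := by
    ext e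
    refine e.ind fun x y => ?_
    simp only [SimpleGraph.mem_edgeFinset, SimpleGraph.mem_edgeSet,
      completeBipartiteGraph_adj, Finset.mem_image, Finset.mem_univ, true_and]
    constructor
    · rintro (⟨hx, hy⟩ | ⟨hx, hy⟩)
      · obtain ⟨u, rfl⟩ := Sum.isLeft_iff.1 hx
        obtain ⟨w, rfl⟩ := Sum.isRight_iff.1 hy
        exact ⟨(u, w), rfl⟩
      · obtain ⟨u, rfl⟩ := Sum.isRight_iff.1 hx
        obtain ⟨w, rfl⟩ := Sum.isLeft_iff.1 hy
        exact ⟨(w, u), Sym2.eq_swap⟩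
    · rintro ⟨⟨u, w⟩, h⟩
      rw [Sym2.eq_iff] at h
      rcases h with ⟨rfl, rfl⟩ | ⟨rfl, rfl⟩ <;> simp
  have hinj : Function.Injective
      (fun p : Fin a × Fin b => s(Sum.inl p.1, Sum.inr p.2) :
        Fin a × Fin b → Sym2 (Fin a ⊕ Fin b)) := by
    intro ⟨u, w⟩ ⟨u', w'⟩ h
    simp only [Sym2.eq_iff] at h
    rcases h with ⟨h1, h2⟩ | ⟨h1, h2⟩
    · simp_all
    · exact absurd h1 (by simp)
  rw [himg, Finset.card_image_of_injective _ hinj, Finset.card_univ,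
    Fintype.card_prod, Fintype.card_fin, Fintype.card_fin]

private def turanIsoCbg (n : ℕ) :
    turanGraph n 2 ≃g completeBipartiteGraph (Fin (n / 2)) (Fin ((n + 1) / 2)) where
  toFun v := if h : (v : ℕ) % 2 = 1 then Sum.inl ⟨(v : ℕ) / 2, by omega⟩
    else Sum.inr ⟨(v : ℕ) / 2, by omega⟩
  invFun x := match x with
    | Sum.inl k => ⟨2 * (k : ℕ) + 1, by omega⟩
    | Sum.inr k => ⟨2 * (k : ℕ), by omega⟩
  left_inv v := by
    dsimp only
    by_cases h : (v : ℕ) % 2 = 1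
    · rw [dif_pos h]
      exact Fin.ext (by show 2 * ((v : ℕ) / 2) + 1 = (v : ℕ); omega)
    · rw [dif_neg h]
      exact Fin.ext (by show 2 * ((v : ℕ) / 2) = (v : ℕ); omega)
  right_inv x := by
    dsimp only
    match x with
    | Sum.inl k =>
      have h : (2 * (k : ℕ) + 1) % 2 = 1 := by omega
      rw [dif_pos h]
      exact congrArg Sum.inl (Fin.ext (by show (2 * (k : ℕ) + 1) / 2 = (k : ℕ); omega))
    | Sum.inr k =>
      have h : ¬ (2 * (k : ℕ)) % 2 = 1 := by omega
      rw [dif_neg h]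
      exact congrArg Sum.inr (Fin.ext (by show (2 * (k : ℕ)) / 2 = (k : ℕ); omega))
  map_rel_iff' := by
    intro v w
    show (completeBipartiteGraph _ _).Adj _ _ ↔ (v : ℕ) % 2 ≠ (w : ℕ) % 2
    simp only [Equiv.coe_fn_mk]
    by_cases hv : (v : ℕ) % 2 = 1 <;> by_cases hw : (w : ℕ) % 2 = 1
    · rw [dif_pos hv, dif_pos hw]; simp [completeBipartiteGraph]; omega
    · rw [dif_pos hv, dif_neg hw]; simp [completeBipartiteGraph]; omega
    · rw [dif_neg hv, dif_pos hw]; simp [completeBipartiteGraph]; omega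
    · rw [dif_neg hv, dif_neg hw]; simp [completeBipartiteGraph]; omega

private lemma floor_mul : ∀ n : ℕ, n / 2 * ((n + 1) / 2) = n ^ 2 / 4 := by
  intro n
  rcases Nat.even_or_odd n with ⟨k, rfl⟩ | ⟨k, rfl⟩
  · have h1 : (k + k) / 2 = k := by omega
    have h2 : (k + k + 1) / 2 = k := by omega
    have h3 : (k + k) ^ 2 = 4 * (k * k) := by ring
    rw [h1, h2, h3, Nat.mul_div_cancel_left _ (by norm_num)]
  · have h1 : (2 * k + 1) / 2 = k := by omega
    have h2 : (2 * k + 1 + 1) / 2 = k + 1 := by omega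
    have h3 : (2 * k + 1) ^ 2 = 4 * (k * (k + 1)) + 1 := by ring
    rw [h1, h2, h3]
    omega

/-- A triangle-free graph on `n` vertices with `⌊n²/4⌋` edges is isomorphic to the
complete bipartite graph `K_{⌊n/2⌋,⌈n/2⌉}`: the extremal graph in Mantel's theorem
is unique. -/
theorem stmt_6 {V : Type*} [Fintype V] [DecidableEq V]
    (G : SimpleGraph V) [DecidableRel G.Adj]
    (htf : G.CliqueFree 3)
    (hm : G.edgeFinset.card = Fintype.card V ^ 2 / 4) :
    Nonempty (G ≃g completeBipartiteGraph
      (Fin (Fintype.card V / 2)) (Fin ((Fintype.card V + 1) / 2))) := by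
  classical
  set n := Fintype.card V with hn
  obtain ⟨H, hd, hH⟩ := SimpleGraph.exists_isTuranMaximal (V := V) (r := 2) two_pos
  obtain ⟨f⟩ := hH.nonempty_iso_turanGraph
  have hcard : H.edgeFinset.card = n ^ 2 / 4 := by
    rw [iso_card_edgeFinset (f.trans (turanIsoCbg n)), cbg_card, floor_mul]
  have hGmax : G.IsTuranMaximal 2 := by
    refine ⟨htf, fun H' _ h' => ?_⟩
    calc H'.edgeFinset.card ≤ H.edgeFinset.card := hH.2 h'
    _ = G.edgeFinset.card := by rw [hcard, hm]
  obtain ⟨g⟩ := hGmax.nonempty_iso_turanGraph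
  exact ⟨g.trans (turanIsoCbg n)⟩
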